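/- The ray F_ne = {(0,0,z) : z ≥ 0} is a face of the exponential cone K_exp, but it is not an exposed face: there is no z ∈ K_exp* with K_exp ∩ {z}⊥ = F_ne. -/

import Mathlib

def Kexp : Set (EuclideanSpace ℝ (Fin 3)) :=
  {v | (0 < v 1 ∧ v 1 * Real.exp (v 0 / v 1) ≤ v 2) ∨ (v 0 ≤ 0 ∧ 0 ≤ v 2 ∧ v 1 = 0)}

def Fne : Set (EuclideanSpace ℝ (Fin 3)) := {v | v 0 = 0 ∧ v 1 = 0 ∧ 0 ≤ v 2}

lemma Kexp_y_nonneg {v : EuclideanSpace ℝ (Fin 3)} (hv : v ∈ Kexp) : 0 ≤ v 1 := by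
  rcases hv with ⟨h, _⟩ | ⟨_, _, h⟩
  · exact h.le
  · exact h.ge

lemma Kexp_of_y_zero {v : EuclideanSpace ℝ (Fin 3)} (hv : v ∈ Kexp) (hy : v 1 = 0) :
    v 0 ≤ 0 ∧ 0 ≤ v 2 := by
  rcases hv with ⟨h, _⟩ | ⟨h1, h2, _⟩
  · rw [hy] at h; exact absurd h (lt_irrefl 0)
  · exact ⟨h1, h2⟩

theorem Fne_face_not_exposed :
    (Fne ⊆ Kexp ∧ IsClosed Fne ∧ Convex ℝ Fne ∧
      (∀ (c : ℝ), 0 ≤ c → ∀ v ∈ Fne, c • v ∈ Fne) ∧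
      (∀ x y, x ∈ Kexp → y ∈ Kexp → x + y ∈ Fne → x ∈ Fne ∧ y ∈ Fne)) ∧
    ¬∃ z : EuclideanSpace ℝ (Fin 3),
      (∀ v ∈ Kexp, 0 ≤ v 0 * z 0 + v 1 * z 1 + v 2 * z 2) ∧
      Kexp ∩ {q | q 0 * z 0 + q 1 * z 1 + q 2 * z 2 = 0} = Fne := by
  constructor
  · refine ⟨?_, ?_, ?_, ?_, ?_⟩
    · intro v hv
      exact Or.inr ⟨hv.1.le, hv.2.2, hv.2.1⟩
    · have h0 : Continuous fun v : EuclideanSpace ℝ (Fin 3) => v 0 :=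
        (EuclideanSpace.proj (0 : Fin 3)).continuous
      have h1 : Continuous fun v : EuclideanSpace ℝ (Fin 3) => v 1 :=
        (EuclideanSpace.proj (1 : Fin 3)).continuous
      have h2 : Continuous fun v : EuclideanSpace ℝ (Fin 3) => v 2 :=
        (EuclideanSpace.proj (2 : Fin 3)).continuous
      exact (isClosed_eq h0 continuous_const).inter
        ((isClosed_eq h1 continuous_const).inter
          (isClosed_le continuous_const h2))
    · intro v hv w hw a b ha hb hab
      refine ⟨?_, ?_, ?_⟩ <;> simp only [PiLp.add_apply, PiLp.smul_apply, smul_eq_mul]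
      · rw [hv.1, hw.1]; ring
      · rw [hv.2.1, hw.2.1]; ring
      · have := mul_nonneg ha hv.2.2
        have := mul_nonneg hb hw.2.2
        linarith
    · intro c hc v hv
      refine ⟨?_, ?_, ?_⟩ <;> simp only [PiLp.smul_apply, smul_eq_mul]
      · rw [hv.1]; ring
      · rw [hv.2.1]; ring
      · exact mul_nonneg hc hv.2.2
    · intro x y hx hy hxy
      obtain ⟨h0, h1, h2⟩ := hxy
      simp only [PiLp.add_apply] at h0 h1 h2
      have hx1 : 0 ≤ x 1 := Kexp_y_nonneg hx
      have hy1 : 0 ≤ y 1 := Kexp_y_nonneg hy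
      have hx1' : x 1 = 0 := by linarith
      have hy1' : y 1 = 0 := by linarith
      obtain ⟨hx0, hx2⟩ := Kexp_of_y_zero hx hx1'
      obtain ⟨hy0, hy2⟩ := Kexp_of_y_zero hy hy1'
      exact ⟨⟨by linarith, hx1', hx2⟩, ⟨by linarith, hy1', hy2⟩⟩
  · rintro ⟨z, hpos, heq⟩
    -- z 2 = 0
    have hv1 : (!₂[0, 0, 1] : EuclideanSpace ℝ (Fin 3)) ∈ Fne := by
      refine ⟨?_, ?_, ?_⟩ <;> norm_num [Matrix.cons_val_two, Matrix.tail_cons, Matrix.head_cons]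
    rw [← heq] at hv1
    have hz2 : z 2 = 0 := by
      have := hv1.2
      simp only [Set.mem_setOf_eq, Matrix.cons_val_zero, Matrix.cons_val_one,
        Matrix.head_cons, Matrix.cons_val_two, Matrix.tail_cons] at this
      linarith
    -- z 0 < 0
    have hv2K : (!₂[-1, 0, 0] : EuclideanSpace ℝ (Fin 3)) ∈ Kexp := by
      refine Or.inr ⟨?_, ?_, ?_⟩ <;> norm_num [Matrix.cons_val_two, Matrix.tail_cons, Matrix.head_cons]
    have hz0le : z 0 ≤ 0 := by
      have := hpos _ hv2K
      simp only [Matrix.cons_val_zero, Matrix.cons_val_one, Matrix.head_cons,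
        Matrix.cons_val_two, Matrix.tail_cons] at this
      linarith
    have hz0 : z 0 < 0 := by
      rcases lt_or_eq_of_le hz0le with h | h
      · exact h
      · exfalso
        have hmem : (!₂[-1, 0, 0] : EuclideanSpace ℝ (Fin 3)) ∈
            Kexp ∩ {q | q 0 * z 0 + q 1 * z 1 + q 2 * z 2 = 0} := by
          refine ⟨hv2K, ?_⟩
          simp only [Set.mem_setOf_eq, Matrix.cons_val_zero, Matrix.cons_val_one,
            Matrix.head_cons, Matrix.cons_val_two, Matrix.tail_cons]
          rw [h]; ring
        rw [heq] at hmem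
        have := hmem.1
        norm_num at this
    -- contradiction with the boundary point
    set x : ℝ := (-z 1 - 1) / z 0 with hx
    have hv3K : (!₂[x, 1, Real.exp x] : EuclideanSpace ℝ (Fin 3)) ∈ Kexp := by
      refine Or.inl ⟨?_, ?_⟩
      · norm_num
      · simp only [Matrix.cons_val_zero, Matrix.cons_val_one, Matrix.head_cons,
          Matrix.cons_val_two, Matrix.tail_cons]
        rw [div_one, one_mul]
    have := hpos _ hv3K
    simp only [Matrix.cons_val_zero, Matrix.cons_val_one, Matrix.head_cons,
      Matrix.cons_val_two, Matrix.tail_cons] at this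
    rw [hx, div_mul_cancel₀ _ (ne_of_lt hz0), hz2] at this
    linarith
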